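/- Let f : ℝ^d → ℝ be L-smooth. Suppose at iteration t the virtual sequence updates as x̃_{t+1} = x̃_t - γ g_t - z_t, where E_t[g_t] = ḡ_t is the average true gradient at x_t, i.e., ḡ_t = ∇f(x_t) evaluated via the good samples. Then for any 0 < ρ < 1/2, E_t[f(x̃_{t+1})] ≤ f(x̃_t) - (1/2 - ρ)(γ/2)||∇f(x_t)||² + (3γL²/2)||x̃_t - x_t||² + Lγ² E_t||g_t||² + (L + 1/(2ργ) + 1/(2γ)) E_t||z_t||². -/

import Mathlib

open MeasureTheory RealInnerProductSpace

lemma descent_lemma {F : Type*} [NormedAddCommGroup F] [InnerProductSpace ℝ F]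
    [CompleteSpace F] (f : F → ℝ) (L : ℝ) (hL : 0 < L)
    (hdiff : Differentiable ℝ f)
    (hLip : ∀ u v, ‖gradient f u - gradient f v‖ ≤ L * ‖u - v‖) (a y : F) :
    f y ≤ f a + ⟪gradient f a, y - a⟫ + L / 2 * ‖y - a‖ ^ 2 := by
  set v := y - a with hv
  have hcont : Continuous (gradient f) := by
    have : LipschitzWith L.toNNReal (gradient f) := by
      apply LipschitzWith.of_dist_le_mul
      intro u w
      rw [dist_eq_norm, dist_eq_norm, Real.coe_toNNReal _ hL.le]
      exact hLip u w
    exact this.continuous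
  have hderiv : ∀ t : ℝ, HasDerivAt (fun t : ℝ => f (a + t • v))
      (⟪gradient f (a + t • v), v⟫) t := by
    intro t
    have h1 : HasDerivAt (fun t : ℝ => a + t • v) v t := by
      simpa using ((hasDerivAt_id t).smul_const v).const_add a
    have h2 := (hdiff (a + t • v)).hasGradientAt.hasFDerivAt
    have := h2.comp_hasDerivAt t h1
    simpa [InnerProductSpace.toDual_apply_apply, Function.comp_def] using this
  have hcont2 : Continuous fun t : ℝ => ⟪gradient f (a + t • v), v⟫ :=
    (hcont.comp (continuous_const.add (continuous_id.smul continuous_const))).inner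
      continuous_const
  have hcont3 : Continuous fun t : ℝ => ⟪gradient f a, v⟫ + L * t * ‖v‖ ^ 2 := by
    apply continuous_const.add
    exact (continuous_const.mul continuous_id).mul continuous_const
  have hftc : f (a + (1:ℝ) • v) - f (a + (0:ℝ) • v)
      = ∫ t in (0:ℝ)..1, ⟪gradient f (a + t • v), v⟫ := by
    exact (intervalIntegral.integral_eq_sub_of_hasDerivAt
      (fun t _ => hderiv t) (hcont2.intervalIntegrable 0 1)).symm
  have hmono : ∫ t in (0:ℝ)..1, ⟪gradient f (a + t • v), v⟫
      ≤ ∫ t in (0:ℝ)..1, (⟪gradient f a, v⟫ + L * t * ‖v‖ ^ 2) := by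
    apply intervalIntegral.integral_mono_on (by norm_num)
      (hcont2.intervalIntegrable 0 1)
      (hcont3.intervalIntegrable 0 1)
    intro t ht
    have h1 : ⟪gradient f (a + t • v), v⟫ - ⟪gradient f a, v⟫
        = ⟪gradient f (a + t • v) - gradient f a, v⟫ := by
      rw [inner_sub_left]
    have h2 : ⟪gradient f (a + t • v) - gradient f a, v⟫ ≤ L * t * ‖v‖ ^ 2 := by
      calc ⟪gradient f (a + t • v) - gradient f a, v⟫
          ≤ ‖gradient f (a + t • v) - gradient f a‖ * ‖v‖ := real_inner_le_norm _ _
        _ ≤ (L * ‖a + t • v - a‖) * ‖v‖ := by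
            exact mul_le_mul_of_nonneg_right (hLip _ _) (norm_nonneg _)
        _ = L * t * ‖v‖ ^ 2 := by
            rw [show a + t • v - a = t • v by abel, norm_smul,
              Real.norm_eq_abs, abs_of_nonneg ht.1]
            ring
    linarith
  have hrhs : ∫ t in (0:ℝ)..1, (⟪gradient f a, v⟫ + L * t * ‖v‖ ^ 2)
      = ⟪gradient f a, v⟫ + L / 2 * ‖v‖ ^ 2 := by
    have hc4 : Continuous fun t : ℝ => L * t * ‖v‖ ^ 2 :=
      (continuous_const.mul continuous_id).mul continuous_const
    rw [intervalIntegral.integral_add (intervalIntegrable_const)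
      (hc4.intervalIntegrable 0 1)]
    simp only [intervalIntegral.integral_const]
    have : ∫ t in (0:ℝ)..1, L * t * ‖v‖ ^ 2 = L / 2 * ‖v‖ ^ 2 := by
      have : (fun t : ℝ => L * t * ‖v‖ ^ 2) = fun t : ℝ => (L * ‖v‖ ^ 2) * t := by
        funext t; ring
      rw [this, intervalIntegral.integral_const_mul, integral_id]
      ring
    rw [this]; simp
  have : a + (1:ℝ) • v = y := by simp [hv]
  have h0 : a + (0:ℝ) • v = a := by simp
  rw [this, h0] at hftc
  linarith [hftc, hmono, hrhs.le, hrhs.ge]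

lemma young_aux (A B c : ℝ) (hc : 0 < c) : A * B ≤ c / 2 * A ^ 2 + 1 / (2 * c) * B ^ 2 := by
  have h : c / 2 * A ^ 2 + 1 / (2 * c) * B ^ 2 - A * B = (c * A - B) ^ 2 / (2 * c) := by
    field_simp; ring
  nlinarith [div_nonneg (sq_nonneg (c * A - B)) (by linarith : (0:ℝ) ≤ 2 * c)]

set_option maxHeartbeats 1000000 in
/-- Recursive bounding of the suboptimality: for `L`-smooth `f`, step size `γ > 0`,
`0 < ρ < 1/2`, and a stochastic gradient `g` with conditional mean `∇f(x)`,
`E f(x̃ - γg - z) ≤ f(x̃) - (1/2-ρ)(γ/2)‖∇f(x)‖² + (3γL²/2)‖x̃-x‖² + Lγ² E‖g‖²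
  + (L + 1/(2ργ) + 1/(2γ)) E‖z‖²`. -/
theorem recursive_suboptimality_bound {d : ℕ} {Ω : Type*} [MeasurableSpace Ω]
    (μ : Measure Ω) [IsProbabilityMeasure μ]
    (f : EuclideanSpace ℝ (Fin d) → ℝ) (L : ℝ) (hL : 0 < L)
    (hdiff : Differentiable ℝ f)
    (hLip : ∀ u v, ‖gradient f u - gradient f v‖ ≤ L * ‖u - v‖)
    (x xt : EuclideanSpace ℝ (Fin d)) (γ ρ : ℝ) (hγ : 0 < γ)
    (hρ0 : 0 < ρ) (hρ : ρ < 1 / 2)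
    (g z : Ω → EuclideanSpace ℝ (Fin d))
    (hg2 : MemLp g 2 μ) (hz2 : MemLp z 2 μ)
    (hmean : ∫ ω, g ω ∂μ = gradient f x)
    (hfint : Integrable (fun ω => f (xt - γ • g ω - z ω)) μ) :
    ∫ ω, f (xt - γ • g ω - z ω) ∂μ ≤
      f xt - (1 / 2 - ρ) * (γ / 2) * ‖gradient f x‖ ^ 2 +
        (3 * γ * L ^ 2 / 2) * ‖xt - x‖ ^ 2 +
        L * γ ^ 2 * ∫ ω, ‖g ω‖ ^ 2 ∂μ +
        (L + 1 / (2 * ρ * γ) + 1 / (2 * γ)) * ∫ ω, ‖z ω‖ ^ 2 ∂μ := by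
  set Gt := gradient f xt with hGt
  set Gx := gradient f x with hGx
  have hργ : 0 < ρ * γ := mul_pos hρ0 hγ
  have hLipTX : ‖Gt - Gx‖ ≤ L * ‖xt - x‖ := hLip xt x
  -- pointwise bound
  have key : ∀ ω, f (xt - γ • g ω - z ω) ≤
      (f xt + (ρ * γ / 2) * ‖Gx‖ ^ 2 + (γ * L ^ 2 / 2) * ‖xt - x‖ ^ 2) +
        ((-γ) * ⟪Gt, g ω⟫ +
          (L * γ ^ 2 * ‖g ω‖ ^ 2 + (L + 1 / (2 * ρ * γ) + 1 / (2 * γ)) * ‖z ω‖ ^ 2)) := by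
    intro ω
    have hd := descent_lemma f L hL hdiff hLip xt (xt - γ • g ω - z ω)
    have hy : xt - γ • g ω - z ω - xt = -(γ • g ω) - z ω := by abel
    rw [hy, ← hGt] at hd
    have e1 : ⟪Gt, -(γ • g ω) - z ω⟫ = -(γ * ⟪Gt, g ω⟫) - ⟪Gx, z ω⟫ - ⟪Gt - Gx, z ω⟫ := by
      rw [inner_sub_right, inner_neg_right, real_inner_smul_right, inner_sub_left]
      ring
    have e2 : ‖-(γ • g ω) - z ω‖ ^ 2 ≤ 2 * γ ^ 2 * ‖g ω‖ ^ 2 + 2 * ‖z ω‖ ^ 2 := by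
      have h1 : ‖-(γ • g ω) - z ω‖ ≤ γ * ‖g ω‖ + ‖z ω‖ := by
        calc ‖-(γ • g ω) - z ω‖ ≤ ‖-(γ • g ω)‖ + ‖z ω‖ := norm_sub_le _ _
          _ = γ * ‖g ω‖ + ‖z ω‖ := by
              rw [norm_neg, norm_smul, Real.norm_eq_abs, abs_of_pos hγ]
      nlinarith [norm_nonneg (-(γ • g ω) - z ω), norm_nonneg (g ω), norm_nonneg (z ω),
        sq_nonneg (γ * ‖g ω‖ - ‖z ω‖)]
    have e2' : L / 2 * ‖-(γ • g ω) - z ω‖ ^ 2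
        ≤ L * γ ^ 2 * ‖g ω‖ ^ 2 + L * ‖z ω‖ ^ 2 := by
      have := mul_le_mul_of_nonneg_left e2 (by positivity : (0:ℝ) ≤ L / 2)
      linarith [this]
    have e3 : -⟪Gx, z ω⟫ ≤ ρ * γ / 2 * ‖Gx‖ ^ 2 + 1 / (2 * ρ * γ) * ‖z ω‖ ^ 2 := by
      have h1 : -⟪Gx, z ω⟫ ≤ ‖Gx‖ * ‖z ω‖ := by
        have h2 := abs_real_inner_le_norm Gx (z ω)
        cases abs_le.mp h2 with
        | intro hlo hhi => linarith
      exact (h1.trans (young_aux _ _ _ hργ)).trans_eq (by ring)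
    have e4 : -⟪Gt - Gx, z ω⟫ ≤ γ * L ^ 2 / 2 * ‖xt - x‖ ^ 2 + 1 / (2 * γ) * ‖z ω‖ ^ 2 := by
      have h1 : -⟪Gt - Gx, z ω⟫ ≤ (L * ‖xt - x‖) * ‖z ω‖ := by
        have h2 := abs_real_inner_le_norm (Gt - Gx) (z ω)
        have h3 : ‖Gt - Gx‖ * ‖z ω‖ ≤ (L * ‖xt - x‖) * ‖z ω‖ :=
          mul_le_mul_of_nonneg_right hLipTX (norm_nonneg _)
        cases abs_le.mp h2 with
        | intro hlo hhi => linarith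
      exact (h1.trans (young_aux _ _ _ hγ)).trans_eq (by ring)
    linarith [hd, e1, e2', e3, e4]
  -- integrability
  have hgint : Integrable g μ := hg2.integrable one_le_two
  have hig : Integrable (fun ω => ⟪Gt, g ω⟫) μ := hgint.const_inner Gt
  have hgsq : Integrable (fun ω => ‖g ω‖ ^ 2) μ := hg2.norm.integrable_sq
  have hzsq : Integrable (fun ω => ‖z ω‖ ^ 2) μ := hz2.norm.integrable_sq
  have hi1 : Integrable (fun ω => (-γ) * ⟪Gt, g ω⟫) μ := hig.const_mul _
  have hi2 : Integrable (fun ω => L * γ ^ 2 * ‖g ω‖ ^ 2) μ := hgsq.const_mul _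
  have hi3 : Integrable (fun ω => (L + 1 / (2 * ρ * γ) + 1 / (2 * γ)) * ‖z ω‖ ^ 2) μ :=
    hzsq.const_mul _
  have hi23 : Integrable (fun ω =>
      L * γ ^ 2 * ‖g ω‖ ^ 2 + (L + 1 / (2 * ρ * γ) + 1 / (2 * γ)) * ‖z ω‖ ^ 2) μ :=
    hi2.add hi3
  have hi123 : Integrable (fun ω => (-γ) * ⟪Gt, g ω⟫ +
      (L * γ ^ 2 * ‖g ω‖ ^ 2 + (L + 1 / (2 * ρ * γ) + 1 / (2 * γ)) * ‖z ω‖ ^ 2)) μ :=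
    hi1.add hi23
  have hrhsint : Integrable (fun ω =>
      (f xt + (ρ * γ / 2) * ‖Gx‖ ^ 2 + (γ * L ^ 2 / 2) * ‖xt - x‖ ^ 2) +
        ((-γ) * ⟪Gt, g ω⟫ +
          (L * γ ^ 2 * ‖g ω‖ ^ 2 + (L + 1 / (2 * ρ * γ) + 1 / (2 * γ)) * ‖z ω‖ ^ 2))) μ :=
    (integrable_const _).add hi123
  have hle := integral_mono hfint hrhsint key
  have hintrhs : ∫ ω, ((f xt + (ρ * γ / 2) * ‖Gx‖ ^ 2 + (γ * L ^ 2 / 2) * ‖xt - x‖ ^ 2) +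
        ((-γ) * ⟪Gt, g ω⟫ +
          (L * γ ^ 2 * ‖g ω‖ ^ 2 + (L + 1 / (2 * ρ * γ) + 1 / (2 * γ)) * ‖z ω‖ ^ 2))) ∂μ
      = (f xt + (ρ * γ / 2) * ‖Gx‖ ^ 2 + (γ * L ^ 2 / 2) * ‖xt - x‖ ^ 2) +
        ((-γ) * ⟪Gt, Gx⟫ +
          (L * γ ^ 2 * (∫ ω, ‖g ω‖ ^ 2 ∂μ) +
            (L + 1 / (2 * ρ * γ) + 1 / (2 * γ)) * (∫ ω, ‖z ω‖ ^ 2 ∂μ))) := by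
    rw [integral_add (integrable_const _) hi123,
      integral_add hi1 hi23, integral_add hi2 hi3,
      integral_const_mul, integral_const_mul, integral_const_mul,
      integral_inner hgint, hmean, integral_const, probReal_univ]
    simp
  rw [hintrhs] at hle
  -- polarization + final algebra
  have hpol : 2 * ⟪Gt, Gx⟫ = ‖Gt‖ ^ 2 + ‖Gx‖ ^ 2 - ‖Gt - Gx‖ ^ 2 := by
    have := @norm_sub_sq_real _ _ _ Gt Gx
    linarith
  have hnlip2 : ‖Gt - Gx‖ ^ 2 ≤ (L * ‖xt - x‖) ^ 2 := by
    nlinarith [hLipTX, norm_nonneg (Gt - Gx), norm_nonneg (xt - x), hL.le]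
  have h5 : (‖Gx‖ ^ 2 - (L * ‖xt - x‖) ^ 2) / 2 ≤ ⟪Gt, Gx⟫ := by
    nlinarith [hpol, hnlip2, sq_nonneg ‖Gt‖]
  have h6 := mul_le_mul_of_nonneg_left h5 hγ.le
  have p1 : 0 ≤ γ * ‖Gx‖ ^ 2 := by positivity
  have p2 : 0 ≤ γ * L ^ 2 * ‖xt - x‖ ^ 2 := by positivity
  linarith [hle, h6, p1, p2]
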